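/- For the Weibull proportional hazards model, the map from the parameters (λ, k, θ₁, θ₂, θ₃) ∈ (0,∞)⁵ with fixed γ ∈ (0,1) to the mixture median under treatment ν^{Rx} (the unique positive root of (1−γ)exp(−θ₁(t/λ)^k) + γexp(−θ₁θ₂θ₃(t/λ)^k) = 1/2) is well defined and continuous. -/

import Mathlib

open Real Filter

noncomputable def Phi (γ r x : ℝ) : ℝ := (1 - γ) * Real.exp (-x) + γ * Real.exp (-(r * x))

lemma Phi_strictAnti {γ : ℝ} (hγ : γ ∈ Set.Ioo (0:ℝ) 1) {r : ℝ} (hr : 0 < r) :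
    StrictAnti (Phi γ r) := by
  intro x y hxy
  unfold Phi
  have h1 : Real.exp (-y) < Real.exp (-x) := Real.exp_lt_exp.2 (by linarith)
  have h2 : Real.exp (-(r*y)) < Real.exp (-(r*x)) := Real.exp_lt_exp.2 (by nlinarith)
  have hg1 := hγ.1; have hg2 := hγ.2
  nlinarith

lemma Phi_zero {γ : ℝ} (r : ℝ) : Phi γ r 0 = 1 := by
  simp [Phi]

lemma Phi_cont (γ : ℝ) : Continuous (fun p : ℝ × ℝ => Phi γ p.1 p.2) := by
  unfold Phi; fun_prop

lemma exists_root {γ : ℝ} (hγ : γ ∈ Set.Ioo (0:ℝ) 1) {r : ℝ} (hr : 0 < r) :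
    ∃ x, 0 < x ∧ Phi γ r x = 1/2 := by
  have hlim : Tendsto (Phi γ r) atTop (nhds 0) := by
    have h1 : Tendsto (fun x : ℝ => Real.exp (-x)) atTop (nhds 0) :=
      Real.tendsto_exp_neg_atTop_nhds_zero
    have h2 : Tendsto (fun x : ℝ => Real.exp (-(r*x))) atTop (nhds 0) := by
      apply h1.comp
      exact Tendsto.const_mul_atTop hr tendsto_id
    have := ((h1.const_mul (1-γ)).add (h2.const_mul γ))
    rw [show Phi γ r = fun x => (1 - γ) * Real.exp (-x) + γ * Real.exp (-(r * x)) from rfl]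
    simpa using this
  have hev : ∀ᶠ x in atTop, Phi γ r x < 1/2 := by
    have := hlim.eventually (eventually_lt_nhds (show (0:ℝ) < 1/2 by norm_num))
    exact this
  obtain ⟨X, hX⟩ := (hev.and (eventually_gt_atTop 0)).exists
  have hcont : ContinuousOn (Phi γ r) (Set.Icc 0 X) := by
    unfold Phi; fun_prop
  have hsub := intermediate_value_Icc' (le_of_lt hX.2) hcont
  have hmem : (1/2 : ℝ) ∈ Set.Icc (Phi γ r X) (Phi γ r 0) := by
    rw [Phi_zero]
    constructor <;> [linarith [hX.1]; norm_num]
  obtain ⟨x, hx, hxe⟩ := hsub hmem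
  refine ⟨x, ?_, hxe⟩
  rcases lt_or_eq_of_le hx.1 with h | h
  · exact h
  · exfalso; rw [← h] at hxe; rw [Phi_zero] at hxe; norm_num at hxe

noncomputable def mroot (γ r : ℝ) : ℝ :=
  Classical.epsilon (fun x => 0 < x ∧ Phi γ r x = 1/2)

lemma mroot_spec {γ : ℝ} (hγ : γ ∈ Set.Ioo (0:ℝ) 1) {r : ℝ} (hr : 0 < r) :
    0 < mroot γ r ∧ Phi γ r (mroot γ r) = 1/2 := by
  exact Classical.epsilon_spec (exists_root hγ hr)

lemma mroot_unique {γ : ℝ} (hγ : γ ∈ Set.Ioo (0:ℝ) 1) {r x : ℝ} (hr : 0 < r)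
    (hx : 0 < x) (hxe : Phi γ r x = 1/2) : x = mroot γ r := by
  have h := mroot_spec hγ hr
  exact (Phi_strictAnti hγ hr).injective (by rw [hxe, h.2])

lemma mroot_continuousOn {γ : ℝ} (hγ : γ ∈ Set.Ioo (0:ℝ) 1) :
    ContinuousOn (mroot γ) (Set.Ioi (0:ℝ)) := by
  intro r₀ hr₀
  rw [Metric.continuousWithinAt_iff]
  intro ε hε
  set x₀ := mroot γ r₀ with hx₀def
  obtain ⟨hx₀pos, hx₀eq⟩ := mroot_spec hγ hr₀
  set ε' := min ε (x₀/2) with hε'def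
  have hε'0 : 0 < ε' := lt_min hε (by linarith)
  have hε'le : ε' ≤ ε := min_le_left _ _
  have h1 : 1/2 < Phi γ r₀ (x₀ - ε') := by
    have := Phi_strictAnti hγ hr₀ (show x₀ - ε' < x₀ by linarith)
    rw [hx₀eq] at this; linarith
  have h2 : Phi γ r₀ (x₀ + ε') < 1/2 := by
    have := Phi_strictAnti hγ hr₀ (show x₀ < x₀ + ε' by linarith)
    rw [hx₀eq] at this; linarith
  have c1 : ∀ᶠ r in nhds r₀, 1/2 < Phi γ r (x₀ - ε') := by
    have hc : ContinuousAt (fun r => Phi γ r (x₀ - ε')) r₀ := by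
      unfold Phi; fun_prop
    exact hc.eventually (eventually_gt_nhds h1)
  have c2 : ∀ᶠ r in nhds r₀, Phi γ r (x₀ + ε') < 1/2 := by
    have hc : ContinuousAt (fun r => Phi γ r (x₀ + ε')) r₀ := by
      unfold Phi; fun_prop
    exact hc.eventually (eventually_lt_nhds h2)
  obtain ⟨δ, hδ, hδP⟩ := Metric.eventually_nhds_iff.1 (c1.and c2)
  refine ⟨δ, hδ, fun r hrS hrδ => ?_⟩
  obtain ⟨hc1, hc2⟩ := hδP hrδ
  have hr : 0 < r := hrS
  obtain ⟨hmpos, hmeq⟩ := mroot_spec hγ hr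
  have hA := Phi_strictAnti hγ hr
  have hlt1 : x₀ - ε' < mroot γ r := by
    by_contra h
    push_neg at h
    have := hA.antitone h
    rw [hmeq] at this; linarith
  have hlt2 : mroot γ r < x₀ + ε' := by
    by_contra h
    push_neg at h
    have := hA.antitone h
    rw [hmeq] at this; linarith
  rw [Real.dist_eq, abs_lt]
  constructor <;> [linarith; linarith]

/-- The mixture median under treatment is a well-defined and continuous
function of the Weibull PH model parameters `(λ, k, θ₁, θ₂, θ₃) ∈ (0,∞)⁵`. -/
theorem stmt_19 (γ : ℝ) (hγ : γ ∈ Set.Ioo (0:ℝ) 1) :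
    ∃ f : ℝ → ℝ → ℝ → ℝ → ℝ → ℝ,
      (∀ lam k θ1 θ2 θ3 : ℝ, 0 < lam → 0 < k → 0 < θ1 → 0 < θ2 → 0 < θ3 →
        (0 < f lam k θ1 θ2 θ3 ∧
          (1 - γ) * Real.exp (-(θ1 * (f lam k θ1 θ2 θ3 / lam) ^ k)) +
            γ * Real.exp (-(θ1 * θ2 * θ3 * (f lam k θ1 θ2 θ3 / lam) ^ k)) = 1/2 ∧
          ∀ t : ℝ, 0 < t →
            (1 - γ) * Real.exp (-(θ1 * (t / lam) ^ k)) +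
              γ * Real.exp (-(θ1 * θ2 * θ3 * (t / lam) ^ k)) = 1/2 →
            t = f lam k θ1 θ2 θ3)) ∧
      ContinuousOn (fun p : ℝ × ℝ × ℝ × ℝ × ℝ =>
          f p.1 p.2.1 p.2.2.1 p.2.2.2.1 p.2.2.2.2)
        {p : ℝ × ℝ × ℝ × ℝ × ℝ |
          0 < p.1 ∧ 0 < p.2.1 ∧ 0 < p.2.2.1 ∧ 0 < p.2.2.2.1 ∧ 0 < p.2.2.2.2} := by
  refine ⟨fun lam k θ1 θ2 θ3 => lam * (mroot γ (θ2 * θ3) / θ1) ^ (1/k), ?_, ?_⟩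
  · intro lam k θ1 θ2 θ3 hlam hk hθ1 hθ2 hθ3
    have hr : 0 < θ2 * θ3 := mul_pos hθ2 hθ3
    obtain ⟨hm, hmeq⟩ := mroot_spec hγ hr
    set m := mroot γ (θ2 * θ3)
    have hc : 0 < m / θ1 := div_pos hm hθ1
    have hcpow : 0 < (m / θ1) ^ (1/k) := Real.rpow_pos_of_pos hc _
    have ht : 0 < lam * (m / θ1) ^ (1/k) := mul_pos hlam hcpow
    have hdiv : lam * (m / θ1) ^ (1/k) / lam = (m / θ1) ^ (1/k) := by
      field_simp
    have hpow : ((m / θ1) ^ (1/k)) ^ k = m / θ1 := by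
      rw [← Real.rpow_mul hc.le, one_div, inv_mul_cancel₀ hk.ne', Real.rpow_one]
    refine ⟨ht, ?_, ?_⟩
    · rw [hdiv, hpow]
      have h1 : θ1 * (m / θ1) = m := by field_simp
      have h2 : θ1 * θ2 * θ3 * (m / θ1) = θ2 * θ3 * m := by field_simp
      rw [h1, h2, ← hmeq, Phi]
    · intro t htpos heq
      have hx : 0 < θ1 * (t / lam) ^ k :=
        mul_pos hθ1 (Real.rpow_pos_of_pos (div_pos htpos hlam) _)
      have hPhi : Phi γ (θ2 * θ3) (θ1 * (t / lam) ^ k) = 1/2 := by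
        rw [Phi]
        have h2 : θ2 * θ3 * (θ1 * (t / lam) ^ k) = θ1 * θ2 * θ3 * (t / lam) ^ k := by ring
        rw [h2]
        exact heq
      have hxm : θ1 * (t / lam) ^ k = m := mroot_unique hγ hr hx hPhi
      have htlam : (t / lam) ^ k = m / θ1 := by
        field_simp at hxm ⊢
        linarith [hxm]
      have : t / lam = (m / θ1) ^ (1/k) := by
        rw [← htlam, ← Real.rpow_mul (div_pos htpos hlam).le, mul_one_div,
          div_self hk.ne', Real.rpow_one]
      have := (div_eq_iff hlam.ne').1 this
      rw [this]; ring
  · set S := {p : ℝ × ℝ × ℝ × ℝ × ℝ |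
      0 < p.1 ∧ 0 < p.2.1 ∧ 0 < p.2.2.1 ∧ 0 < p.2.2.2.1 ∧ 0 < p.2.2.2.2}
    have hmc : ContinuousOn (fun p : ℝ × ℝ × ℝ × ℝ × ℝ =>
        mroot γ (p.2.2.2.1 * p.2.2.2.2)) S := by
      apply (mroot_continuousOn hγ).comp
      · fun_prop
      · intro p hp
        exact mul_pos hp.2.2.2.1 hp.2.2.2.2
    have hbase : ContinuousOn (fun p : ℝ × ℝ × ℝ × ℝ × ℝ =>
        mroot γ (p.2.2.2.1 * p.2.2.2.2) / p.2.2.1) S := by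
      apply hmc.div (by fun_prop)
      intro p hp
      exact hp.2.2.1.ne'
    have hrp : ContinuousOn (fun p : ℝ × ℝ × ℝ × ℝ × ℝ =>
        (mroot γ (p.2.2.2.1 * p.2.2.2.2) / p.2.2.1) ^ (1/p.2.1)) S := by
      apply hbase.rpow
      · apply ContinuousOn.div continuousOn_const (by fun_prop)
        intro p hp; exact hp.2.1.ne'
      · intro p hp
        left
        have hm := (mroot_spec hγ (mul_pos hp.2.2.2.1 hp.2.2.2.2)).1
        exact (div_pos hm hp.2.2.1).ne'
    exact (continuous_fst.continuousOn).mul hrp
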